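/- For x, y ∈ S² with 0 < ρ(x,y) < π define the midpoint set M(x,y) = {m ∈ S² : ρ(x,m) = ρ(m,y) and ρ(x,m) + ρ(m,y) ≤ π}. Let p ∈ S², let u be a unit tangent vector at p, and set M∞ = {m ∈ S² : ⟨m,p⟩ = 0 and ⟨m,u⟩ ≥ 0}. Suppose p_i ∈ S² and u_i are unit tangent vectors at p_i with p_i → p and u_i → u, and ℓ_i ∈ (0,π) with ℓ_i → π; set q_i = (cos ℓ_i)·p_i + (sin ℓ_i)·u_i. Then the Hausdorff distance between M(p_i,q_i) and M∞ tends to 0 as i → ∞. -/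

import Mathlib

open scoped RealInnerProductSpace
open Real

noncomputable section

/-- Euclidean 3-space. -/
abbrev E3 : Type := EuclideanSpace ℝ (Fin 3)

/-- The unit sphere S² in ℝ³. -/
def sphere2 : Set E3 := {x : E3 | ‖x‖ = 1}

/-- The round (geodesic) distance ρ(p,q) = arccos⟨p,q⟩ on S². -/
def rho (p q : E3) : ℝ := Real.arccos ⟪p, q⟫

/-- `UnitTangent p v` : `v` is a unit tangent vector at `p`. -/
def UnitTangent (p v : E3) : Prop := ‖v‖ = 1 ∧ ⟪p, v⟫ = 0

/-- The unit-speed great-circle arc γ_{p,v}(t) = (cos t)·p + (sin t)·v. -/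
def geo (p v : E3) (t : ℝ) : E3 := (Real.cos t) • p + (Real.sin t) • v
/-- The midpoint set `M(x,y)`: points `m` of the sphere equidistant from `x`
and `y` with total distance at most `π`. -/
def Mset (x y : E3) : Set E3 :=
  {m ∈ sphere2 | rho x m = rho m y ∧ rho x m + rho m y ≤ π}

/-! ### Auxiliary material -/

lemma inner3 (x y : E3) : ⟪x, y⟫ = x 0 * y 0 + x 1 * y 1 + x 2 * y 2 := by
  simp [PiLp.inner_apply, Fin.sum_univ_three]; ring

/-- Cross product on `E3`. -/
def cr (x y : E3) : E3 :=
  (EuclideanSpace.equiv (Fin 3) ℝ).symm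
    ![x 1 * y 2 - x 2 * y 1, x 2 * y 0 - x 0 * y 2, x 0 * y 1 - x 1 * y 0]

lemma cr_apply (x y : E3) : cr x y 0 = x 1 * y 2 - x 2 * y 1 ∧
    cr x y 1 = x 2 * y 0 - x 0 * y 2 ∧ cr x y 2 = x 0 * y 1 - x 1 * y 0 :=
  ⟨rfl, rfl, rfl⟩

lemma inner_cr_left (x y : E3) : ⟪x, cr x y⟫ = 0 := by
  obtain ⟨h0, h1, h2⟩ := cr_apply x y
  rw [inner3, h0, h1, h2]; ring

lemma inner_cr_right (x y : E3) : ⟪y, cr x y⟫ = 0 := by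
  obtain ⟨h0, h1, h2⟩ := cr_apply x y
  rw [inner3, h0, h1, h2]; ring

lemma inner_cr_self (x y : E3) : ⟪cr x y, cr x y⟫ = ⟪x,x⟫ * ⟪y,y⟫ - ⟪x,y⟫^2 := by
  obtain ⟨h0, h1, h2⟩ := cr_apply x y
  rw [inner3, inner3, inner3, inner3, h0, h1, h2]; ring

lemma expand3 (n d e m : E3)
    (hnn : ⟪n,n⟫ = 1) (hdd : ⟪d,d⟫ = 1) (hee : ⟪e,e⟫ = 1)
    (hnd : ⟪n,d⟫ = 0) (hne : ⟪n,e⟫ = 0) (hde : ⟪d,e⟫ = 0) :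
    m = ⟪m,n⟫ • n + ⟪m,d⟫ • d + ⟪m,e⟫ • e := by
  rw [inner3, inner3, inner3] at *
  set A : Matrix (Fin 3) (Fin 3) ℝ := Matrix.of ![(n : Fin 3 → ℝ), d, e] with hA
  have h1 : A * A.transpose = 1 := by
    ext i j
    rw [Matrix.mul_apply]
    simp only [Matrix.transpose_apply]
    fin_cases i <;> fin_cases j <;>
      simp [hA, Fin.sum_univ_three, Matrix.one_apply] <;> linarith
  have h2 : A.transpose * A = 1 := mul_eq_one_comm.mp h1
  have E : ∀ i j : Fin 3, n i * n j + d i * d j + e i * e j = if i = j then 1 else 0 := by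
    intro i j
    have := congrFun (congrFun h2 i) j
    rw [Matrix.mul_apply] at this
    simp only [Matrix.transpose_apply] at this
    simpa [hA, Fin.sum_univ_three, Matrix.one_apply] using this
  ext j
  simp only [PiLp.add_apply, PiLp.smul_apply, smul_eq_mul]
  have E0 := E 0 j; have E1 := E 1 j; have E2 := E 2 j
  fin_cases j <;>
    simp only [Fin.zero_eta, Fin.mk_one, Fin.reduceFinMk] at E0 E1 E2 ⊢ <;>
    simp at E0 E1 E2 <;>
    linear_combination (-1 : ℝ) * (m 0 * E0 + m 1 * E1 + m 2 * E2)

/-- Half great circles. -/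
def Hset (n d : E3) : Set E3 := {m | ‖m‖ = 1 ∧ ⟪m, n⟫ = 0 ∧ 0 ≤ ⟪m, d⟫}

lemma norm_one_of_inner_self (m : E3) (h : ⟪m,m⟫ = 1) : ‖m‖ = 1 := by
  have h2 : ⟪m,m⟫ = ‖m‖ * ‖m‖ := real_inner_self_eq_norm_mul_norm m
  nlinarith [norm_nonneg m]

lemma hset_approx (n d n' d' : E3)
    (hn : ⟪n,n⟫ = 1) (hd : ⟪d,d⟫ = 1) (hnd : ⟪n,d⟫ = 0)
    (hn' : ⟪n',n'⟫ = 1) (hd' : ⟪d',d'⟫ = 1) (hnd' : ⟪n',d'⟫ = 0) :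
    ∀ m ∈ Hset n d, ∃ m' ∈ Hset n' d',
      dist m m' ≤ ‖d - d'‖ + ‖cr n d - cr n' d'‖ := by
  intro m hm
  obtain ⟨hm1, hmn, hmd⟩ := hm
  set e := cr n d with he
  set e' := cr n' d' with he'
  have hee : ⟪e,e⟫ = 1 := by rw [he, inner_cr_self, hn, hd, hnd]; ring
  have hee' : ⟪e',e'⟫ = 1 := by rw [he', inner_cr_self, hn', hd', hnd']; ring
  have hne : ⟪n,e⟫ = 0 := inner_cr_left n d
  have hde : ⟪d,e⟫ = 0 := inner_cr_right n d
  have hne' : ⟪n',e'⟫ = 0 := inner_cr_left n' d'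
  have hde' : ⟪d',e'⟫ = 0 := inner_cr_right n' d'
  have hexp := expand3 n d e m hn hd hee hnd hne hde
  rw [hmn, zero_smul, zero_add] at hexp
  set a := ⟪m,d⟫ with ha
  set b := ⟪m,e⟫ with hb
  have hab : a^2 + b^2 = 1 := by
    have h1 : ⟪m,m⟫ = 1 := by
      rw [real_inner_self_eq_norm_mul_norm, hm1]; ring
    calc a^2 + b^2 = ⟪m, a • d + b • e⟫ := by
          rw [inner_add_right, real_inner_smul_right, real_inner_smul_right, ← ha, ← hb]; ring
      _ = 1 := by rw [← hexp]; exact h1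
  refine ⟨a • d' + b • e', ⟨?_, ?_, ?_⟩, ?_⟩
  · apply norm_one_of_inner_self
    have h1 : ⟪e',d'⟫ = (0:ℝ) := by rw [real_inner_comm]; exact hde'
    simp only [inner_add_left, inner_add_right, real_inner_smul_left,
      real_inner_smul_right, hd', hee', hde', h1]
    linear_combination hab
  · have h2 : ⟪d',n'⟫ = (0:ℝ) := by rw [real_inner_comm]; exact hnd'
    have h3 : ⟪e',n'⟫ = (0:ℝ) := by rw [real_inner_comm]; exact hne'
    simp only [inner_add_left, real_inner_smul_left, h2, h3]
    ring
  · have h1 : ⟪e',d'⟫ = (0:ℝ) := by rw [real_inner_comm]; exact hde'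
    simp only [inner_add_left, real_inner_smul_left, hd', h1]
    simpa using hmd
  · have habs : |a| ≤ 1 ∧ |b| ≤ 1 := by
      constructor <;> rw [abs_le] <;> constructor <;> nlinarith [hab]
    have hrw : m - (a • d' + b • e') = a • (d - d') + b • (e - e') := by
      rw [hexp]; module
    rw [dist_eq_norm, hrw]
    calc ‖a • (d - d') + b • (e - e')‖ ≤ ‖a • (d - d')‖ + ‖b • (e - e')‖ := norm_add_le _ _
      _ = |a| * ‖d - d'‖ + |b| * ‖e - e'‖ := by
          rw [norm_smul, norm_smul]; simp [Real.norm_eq_abs]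
      _ ≤ 1 * ‖d - d'‖ + 1 * ‖e - e'‖ := by gcongr; exacts [habs.1, habs.2]
      _ = ‖d - d'‖ + ‖e - e'‖ := by ring

lemma mset_eq (p u : E3) (hp : ‖p‖ = 1) (hu : ‖u‖ = 1) (hpu : ⟪p,u⟫ = 0)
    (l : ℝ) (hl0 : 0 < l) (hlπ : l < π) :
    Mset p (geo p u l) =
      Hset (Real.sin (l/2) • p - Real.cos (l/2) • u)
           (Real.cos (l/2) • p + Real.sin (l/2) • u) := by
  have hπ := Real.pi_pos
  have hs : 0 < Real.sin (l/2) :=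
    Real.sin_pos_of_pos_of_lt_pi (by linarith) (by linarith)
  have hc : 0 < Real.cos (l/2) :=
    Real.cos_pos_of_mem_Ioo ⟨by linarith, by linarith⟩
  set s := Real.sin (l/2) with hsdef
  set c := Real.cos (l/2) with hcdef
  have hsc : s^2 + c^2 = 1 := Real.sin_sq_add_cos_sq (l/2)
  have hcl : Real.cos l = 2 * c^2 - 1 := by
    have := Real.cos_two_mul (l/2)
    rwa [show 2 * (l/2) = l by ring] at this
  have hsl : Real.sin l = 2 * s * c := by
    have h := Real.sin_two_mul (l/2)
    rw [show 2 * (l/2) = l by ring] at h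
    linear_combination h
  have hpp : ⟪p,p⟫ = 1 := by
    rw [real_inner_self_eq_norm_mul_norm, hp]; ring
  have huu : ⟪u,u⟫ = 1 := by
    rw [real_inner_self_eq_norm_mul_norm, hu]; ring
  have hup : ⟪u,p⟫ = 0 := by rw [real_inner_comm]; exact hpu
  have hq1 : ‖geo p u l‖ = 1 := by
    apply norm_one_of_inner_self
    have h' : ⟪geo p u l, geo p u l⟫ = Real.cos l ^ 2 + Real.sin l ^ 2 := by
      simp only [geo, inner_add_left, inner_add_right, real_inner_smul_left,
        real_inner_smul_right, hpp, huu, hpu, hup]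
      try ring
    rw [h']
    linear_combination Real.sin_sq_add_cos_sq l
  ext m
  simp only [Mset, Hset, sphere2, Set.mem_setOf_eq, Set.mem_sep_iff]
  have hmq : ⟪m, geo p u l⟫ = Real.cos l * ⟪m,p⟫ + Real.sin l * ⟪m,u⟫ := by
    simp only [geo, inner_add_right, real_inner_smul_right]
  have hpm : ⟪p,m⟫ = ⟪m,p⟫ := real_inner_comm _ _
  constructor
  · rintro ⟨hm, h1, h2⟩
    refine ⟨hm, ?_, ?_⟩
    case _ =>
      have hb1 : |⟪p,m⟫| ≤ 1 := by
        have := abs_real_inner_le_norm p m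
        rwa [hp, hm, one_mul] at this
      have hb2 : |⟪m, geo p u l⟫| ≤ 1 := by
        have := abs_real_inner_le_norm m (geo p u l)
        rwa [hq1, hm, one_mul] at this
      rw [abs_le] at hb1 hb2
      have heq : ⟪p,m⟫ = ⟪m, geo p u l⟫ := by
        have := congrArg Real.cos h1
        rwa [rho, rho, Real.cos_arccos hb1.1 hb1.2, Real.cos_arccos hb2.1 hb2.2] at this
      have hlin : ⟪m,p⟫ = Real.cos l * ⟪m,p⟫ + Real.sin l * ⟪m,u⟫ :=
        (hpm.symm.trans heq).trans hmq
      have key : s * ⟪m,p⟫ - c * ⟪m,u⟫ = 0 := by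
        have h0 : s * (s * ⟪m,p⟫ - c * ⟪m,u⟫) = 0 := by
          linear_combination (1/2) * hlin + (⟪m,p⟫/2) * hcl + (⟪m,u⟫/2) * hsl + ⟪m,p⟫ * hsc
        rcases mul_eq_zero.mp h0 with h | h
        · exact absurd h (ne_of_gt hs)
        · exact h
      simp only [inner_sub_right, real_inner_smul_right]
      linarith [key]
    case _ =>
      have hb1 : |⟪p,m⟫| ≤ 1 := by
        have := abs_real_inner_le_norm p m
        rwa [hp, hm, one_mul] at this
      have hb2 : |⟪m, geo p u l⟫| ≤ 1 := by
        have := abs_real_inner_le_norm m (geo p u l)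
        rwa [hq1, hm, one_mul] at this
      rw [abs_le] at hb1 hb2
      have heq : ⟪p,m⟫ = ⟪m, geo p u l⟫ := by
        have := congrArg Real.cos h1
        rwa [rho, rho, Real.cos_arccos hb1.1 hb1.2, Real.cos_arccos hb2.1 hb2.2] at this
      have hpm0 : 0 ≤ ⟪p,m⟫ := by
        rw [rho, rho, ← heq] at h2
        have : Real.arccos ⟪p,m⟫ ≤ π/2 := by linarith
        exact Real.arccos_le_pi_div_two.mp this
      have hlin : ⟪m,p⟫ = Real.cos l * ⟪m,p⟫ + Real.sin l * ⟪m,u⟫ :=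
        (hpm.symm.trans heq).trans hmq
      have key : s * ⟪m,p⟫ - c * ⟪m,u⟫ = 0 := by
        have h0 : s * (s * ⟪m,p⟫ - c * ⟪m,u⟫) = 0 := by
          linear_combination (1/2) * hlin + (⟪m,p⟫/2) * hcl + (⟪m,u⟫/2) * hsl + ⟪m,p⟫ * hsc
        rcases mul_eq_zero.mp h0 with h | h
        · exact absurd h (ne_of_gt hs)
        · exact h
      have hA0 : 0 ≤ ⟪m,p⟫ := hpm ▸ hpm0
      have hcA : c * (c * ⟪m,p⟫ + s * ⟪m,u⟫) = ⟪m,p⟫ := by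
        linear_combination (-s) * key + ⟪m,p⟫ * hsc
      simp only [inner_add_right, real_inner_smul_right]
      nlinarith [hc, hA0, hcA]
  · rintro ⟨hm, h1, h2⟩
    have key : s * ⟪m,p⟫ - c * ⟪m,u⟫ = 0 := by
      simp only [inner_sub_right, real_inner_smul_right] at h1
      linarith
    have h2' : 0 ≤ c * ⟪m,p⟫ + s * ⟪m,u⟫ := by
      simp only [inner_add_right, real_inner_smul_right] at h2
      linarith
    have hcA : c * (c * ⟪m,p⟫ + s * ⟪m,u⟫) = ⟪m,p⟫ := by
      linear_combination (-s) * key + ⟪m,p⟫ * hsc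
    have hA0 : 0 ≤ ⟪m,p⟫ := hcA ▸ mul_nonneg hc.le h2'
    have heq : ⟪p,m⟫ = ⟪m, geo p u l⟫ := by
      rw [hpm, hmq]
      linear_combination (-⟪m,p⟫) * hcl + (-⟪m,u⟫) * hsl + 2 * s * key - 2 * ⟪m,p⟫ * hsc
    have hpm0 : 0 ≤ ⟪p,m⟫ := by rw [hpm]; exact hA0
    refine ⟨hm, ?_, ?_⟩
    · rw [rho, rho, heq]
    · rw [rho, rho, ← heq]
      have : Real.arccos ⟪p,m⟫ ≤ π/2 := Real.arccos_le_pi_div_two.mpr hpm0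
      linarith

lemma cont_coord (i : Fin 3) : Continuous fun x : E3 => x i := by
  exact (continuous_apply i).comp (PiLp.continuous_ofLp 2 fun _ : Fin 3 => ℝ)

lemma cr_continuous : Continuous fun q : E3 × E3 => cr q.1 q.2 := by
  apply ((EuclideanSpace.equiv (Fin 3) ℝ).symm.continuous).comp
  have c1 : ∀ i : Fin 3, Continuous fun q : E3 × E3 => q.1 i :=
    fun i => (cont_coord i).comp continuous_fst
  have c2 : ∀ i : Fin 3, Continuous fun q : E3 × E3 => q.2 i :=
    fun i => (cont_coord i).comp continuous_snd
  apply continuous_pi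
  intro i
  fin_cases i <;>
    simp only [Matrix.cons_val_zero, Matrix.cons_val_one, Matrix.head_cons,
      Matrix.cons_val_two, Matrix.tail_cons] <;>
    exact Continuous.sub (Continuous.mul (c1 _) (c2 _)) (Continuous.mul (c1 _) (c2 _))

attribute [irreducible] cr

set_option maxHeartbeats 1000000 in
theorem midpoint_sets_converge
    (p u : E3) (hp : p ∈ sphere2) (hu : UnitTangent p u)
    (ps us : ℕ → E3) (hps : ∀ i, ps i ∈ sphere2)
    (hus : ∀ i, UnitTangent (ps i) (us i))
    (hp' : Filter.Tendsto ps Filter.atTop (nhds p))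
    (hu' : Filter.Tendsto us Filter.atTop (nhds u))
    (ℓ : ℕ → ℝ) (hℓ : ∀ i, ℓ i ∈ Set.Ioo (0:ℝ) π)
    (hℓ' : Filter.Tendsto ℓ Filter.atTop (nhds π)) :
    Filter.Tendsto
      (fun i => Metric.hausdorffDist (Mset (ps i) (geo (ps i) (us i) (ℓ i)))
        {m ∈ sphere2 | ⟪m, p⟫ = 0 ∧ 0 ≤ ⟪m, u⟫})
      Filter.atTop (nhds 0) := by
  have hp1 : ‖p‖ = 1 := hp
  have hu1 : ‖u‖ = 1 := hu.1
  have hpu : ⟪p,u⟫ = 0 := hu.2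
  have hpp : ⟪p,p⟫ = 1 := by rw [real_inner_self_eq_norm_mul_norm, hp1]; ring
  have huu : ⟪u,u⟫ = 1 := by rw [real_inner_self_eq_norm_mul_norm, hu1]; ring
  -- the limit set is a half great circle
  have hMinf : {m ∈ sphere2 | ⟪m, p⟫ = 0 ∧ 0 ≤ ⟪m, u⟫} = Hset p u := by
    ext m; exact Iff.rfl
  -- the moving frames
  set N : ℕ → E3 := fun i => Real.sin (ℓ i / 2) • ps i - Real.cos (ℓ i / 2) • us i with hN
  set D : ℕ → E3 := fun i => Real.cos (ℓ i / 2) • ps i + Real.sin (ℓ i / 2) • us i with hD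
  have hMi : ∀ i, Mset (ps i) (geo (ps i) (us i) (ℓ i)) = Hset (N i) (D i) := by
    intro i
    exact mset_eq (ps i) (us i) (hps i) (hus i).1 (hus i).2 (ℓ i) (hℓ i).1 (hℓ i).2
  -- orthonormality of the frames
  have hortho : ∀ i, ⟪N i, N i⟫ = 1 ∧ ⟪D i, D i⟫ = 1 ∧ ⟪N i, D i⟫ = 0 := by
    intro i
    have hpp' : ⟪ps i, ps i⟫ = 1 := by
      rw [real_inner_self_eq_norm_mul_norm, hps i]; ring
    have huu' : ⟪us i, us i⟫ = 1 := by
      rw [real_inner_self_eq_norm_mul_norm, (hus i).1]; ring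
    have hpu' : ⟪ps i, us i⟫ = 0 := (hus i).2
    have hup' : ⟪us i, ps i⟫ = 0 := by rw [real_inner_comm]; exact hpu'
    have hsc := Real.sin_sq_add_cos_sq (ℓ i / 2)
    refine ⟨?_, ?_, ?_⟩ <;>
      simp only [hN, hD, inner_sub_left, inner_sub_right, inner_add_left, inner_add_right,
        real_inner_smul_left, real_inner_smul_right, hpp', huu', hpu', hup'] <;>
      linarith [hsc]
  -- the error bound
  set ε : ℕ → ℝ := fun i => ‖D i - u‖ + ‖cr (N i) (D i) - cr p u‖ with hε
  have hbound : ∀ i, Metric.hausdorffDist (Mset (ps i) (geo (ps i) (us i) (ℓ i)))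
      {m ∈ sphere2 | ⟪m, p⟫ = 0 ∧ 0 ≤ ⟪m, u⟫} ≤ ε i := by
    intro i
    rw [hMi i, hMinf]
    obtain ⟨hNN, hDD, hND⟩ := hortho i
    apply Metric.hausdorffDist_le_of_mem_dist
    · positivity
    · exact hset_approx (N i) (D i) p u hNN hDD hND hpp huu hpu
    · intro x hx
      obtain ⟨y, hy, hxy⟩ := hset_approx p u (N i) (D i) hpp huu hpu hNN hDD hND x hx
      refine ⟨y, hy, ?_⟩
      calc dist x y ≤ ‖u - D i‖ + ‖cr p u - cr (N i) (D i)‖ := hxy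
        _ = ε i := by rw [hε, norm_sub_rev, norm_sub_rev (cr p u)]
  -- the error bound tends to 0
  have hl2 : Filter.Tendsto (fun i => ℓ i / 2) Filter.atTop (nhds (π/2)) :=
    hℓ'.div_const 2
  have hcos : Filter.Tendsto (fun i => Real.cos (ℓ i / 2)) Filter.atTop (nhds 0) := by
    have := (Real.continuous_cos.tendsto (π/2)).comp hl2
    simpa [Real.cos_pi_div_two, Function.comp_def] using this
  have hsin : Filter.Tendsto (fun i => Real.sin (ℓ i / 2)) Filter.atTop (nhds 1) := by
    have := (Real.continuous_sin.tendsto (π/2)).comp hl2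
    simpa [Real.sin_pi_div_two, Function.comp_def] using this
  have hDlim : Filter.Tendsto D Filter.atTop (nhds u) := by
    have := (hcos.smul hp').add (hsin.smul hu')
    simpa using this
  have hNlim : Filter.Tendsto N Filter.atTop (nhds p) := by
    have := (hsin.smul hp').sub (hcos.smul hu')
    simpa using this
  have hcrlim : Filter.Tendsto (fun i => cr (N i) (D i)) Filter.atTop (nhds (cr p u)) := by
    have hpair : Filter.Tendsto (fun i => (N i, D i)) Filter.atTop (nhds (p, u)) :=
      hNlim.prodMk_nhds hDlim
    exact (cr_continuous.tendsto (p, u)).comp hpair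
  have hεlim : Filter.Tendsto ε Filter.atTop (nhds 0) := by
    have h1 : Filter.Tendsto (fun i => ‖D i - u‖) Filter.atTop (nhds 0) := by
      have := (hDlim.sub (tendsto_const_nhds (x := u))).norm
      simpa using this
    have h2 : Filter.Tendsto (fun i => ‖cr (N i) (D i) - cr p u‖) Filter.atTop (nhds 0) := by
      have := (hcrlim.sub (tendsto_const_nhds (x := cr p u))).norm
      simpa using this
    have := h1.add h2
    simpa using this
  exact squeeze_zero (fun i => Metric.hausdorffDist_nonneg) hbound hεlim
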